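/- arXiv:2508.05809 — 2 statements merged into one kernel-verified Lean document; each statement's English description precedes it below -/
import Mathlib

section
/- Let L be an atomic 0-distributive lattice with least element 0 having at least three distinct atoms. Then every vertex x ∈ Z*(L) of G^c(L) is mutually maximally distant in G^c(L) from some vertex y ∈ Z*(L); consequently the vertex set of the strong resolving graph of G^c(L) (the boundary of G^c(L)) is all of Z*(L). -/
/-- The set of nonzero zero-divisors of a lattice `L` with least element `⊥`. -/
def ZStar (L : Type*) [Lattice L] [OrderBot L] : Type _ :=
  {a : L // a ≠ ⊥ ∧ ∃ b : L, b ≠ ⊥ ∧ a ⊓ b = ⊥}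

/-- The complement of the zero-divisor graph of a lattice `L`. -/
def GcL (L : Type*) [Lattice L] [OrderBot L] : SimpleGraph (ZStar L) where
  Adj x y := x ≠ y ∧ (x.1 ⊓ y.1 ≠ ⊥)
  symm := ⟨fun x y h => ⟨h.1.symm, by rw [inf_comm]; exact h.2⟩⟩
  loopless := ⟨fun x h => h.1 rfl⟩

/-- `u` is maximally distant from `v` in `G`. -/
def MaxDistant {V : Type*} (G : SimpleGraph V) (u v : V) : Prop :=
  ∀ w : V, G.Adj u w → G.dist w v ≤ G.dist u v

/-- `u` and `v` are mutually maximally distant in `G`. -/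
def MutuallyMaxDistant {V : Type*} (G : SimpleGraph V) (u v : V) : Prop :=
  MaxDistant G u v ∧ MaxDistant G v u

section Aux

variable {L : Type*} [Lattice L] [OrderBot L] [IsAtomic L]

lemma atom_inf_eq_bot {p q : L} (hp : IsAtom p) (hq : IsAtom q) (h : p ≠ q) :
    p ⊓ q = ⊥ :=
  disjoint_iff.mp (hp.disjoint_of_ne hq h)

/-- A third atom distinct from two given elements. -/
lemma exists_third_atom {p q : L}
    (hatoms : ∃ a b c : L, IsAtom a ∧ IsAtom b ∧ IsAtom c ∧ a ≠ b ∧ a ≠ c ∧ b ≠ c) :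
    ∃ r : L, IsAtom r ∧ r ≠ p ∧ r ≠ q := by
  obtain ⟨a, b, c, ha, hb, hc, hab, hac, hbc⟩ := hatoms
  by_cases h1 : a ≠ p ∧ a ≠ q
  · exact ⟨a, ha, h1.1, h1.2⟩
  by_cases h2 : b ≠ p ∧ b ≠ q
  · exact ⟨b, hb, h2.1, h2.2⟩
  by_cases h3 : c ≠ p ∧ c ≠ q
  · exact ⟨c, hc, h3.1, h3.2⟩
  push_neg at h1 h2 h3
  exfalso
  by_cases hap : a = p
  · by_cases hbp : b = p
    · exact hab (hap.trans hbp.symm)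
    · have hbq : b = q := h2 hbp
      by_cases hcp : c = p
      · exact hac (hap.trans hcp.symm)
      · exact hbc (hbq.trans (h3 hcp).symm)
  · have haq : a = q := h1 hap
    by_cases hbq : b = q
    · exact hab (haq.trans hbq.symm)
    · have hbp : b = p := by
        by_contra hbp; exact hbq (h2 hbp)
      by_cases hcq : c = q
      · exact hac (haq.trans hcq.symm)
      · have hcp : c = p := by
          by_contra hcp; exact hcq (h3 hcp)
        exact hbc (hbp.trans hcp.symm)

/-- Common neighbor lemma: any two vertices with meet `⊥` have a common neighbor. -/
lemma common_neighbor
    (h0dist : ∀ a b c : L, a ⊓ b = ⊥ → a ⊓ c = ⊥ → a ⊓ (b ⊔ c) = ⊥)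
    (hatoms : ∃ a b c : L, IsAtom a ∧ IsAtom b ∧ IsAtom c ∧ a ≠ b ∧ a ≠ c ∧ b ≠ c)
    (u v : ZStar L) (huv : u.1 ⊓ v.1 = ⊥) :
    ∃ w : ZStar L, (GcL L).Adj u w ∧ (GcL L).Adj w v := by
  obtain ⟨p, hp, hpu⟩ := (IsAtomic.eq_bot_or_exists_atom_le u.1).resolve_left u.2.1
  obtain ⟨q, hq, hqv⟩ := (IsAtomic.eq_bot_or_exists_atom_le v.1).resolve_left v.2.1
  have hpq : p ≠ q := by
    rintro rfl
    exact hp.1 (le_antisymm ((le_inf hpu hqv).trans huv.le) bot_le)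
  obtain ⟨r, hr, hrp, hrq⟩ := exists_third_atom (p := p) (q := q) hatoms
  have hw0 : (p ⊔ q) ⊓ r = ⊥ := by
    rw [inf_comm]
    exact h0dist r p q (atom_inf_eq_bot hr hp hrp) (atom_inf_eq_bot hr hq hrq)
  have hwne : (p ⊔ q : L) ≠ ⊥ := fun h =>
    hp.1 (le_antisymm (le_sup_left.trans h.le) bot_le)
  have huw : u.1 ⊓ (p ⊔ q) ≠ ⊥ := fun h =>
    hp.1 (le_antisymm ((le_inf hpu le_sup_left).trans h.le) bot_le)
  have hwv : (p ⊔ q) ⊓ v.1 ≠ ⊥ := fun h =>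
    hq.1 (le_antisymm ((le_inf le_sup_right hqv).trans h.le) bot_le)
  refine ⟨⟨p ⊔ q, hwne, r, hr.1, hw0⟩, ⟨?_, huw⟩, ⟨?_, hwv⟩⟩
  · intro h
    apply hwv
    rw [← show u.1 = p ⊔ q from congrArg Subtype.val h]
    exact huv
  · intro h
    apply huw
    rw [show (p ⊔ q : L) = v.1 from congrArg Subtype.val h]
    exact huv

/-- The diameter of `G^c(L)` is at most `2`. -/
lemma dist_le_two
    (h0dist : ∀ a b c : L, a ⊓ b = ⊥ → a ⊓ c = ⊥ → a ⊓ (b ⊔ c) = ⊥)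
    (hatoms : ∃ a b c : L, IsAtom a ∧ IsAtom b ∧ IsAtom c ∧ a ≠ b ∧ a ≠ c ∧ b ≠ c)
    (u v : ZStar L) : (GcL L).dist u v ≤ 2 := by
  rcases eq_or_ne u v with rfl | hne
  · rw [SimpleGraph.dist_self]; exact Nat.zero_le 2
  by_cases hadj : (GcL L).Adj u v
  · exact (SimpleGraph.dist_eq_one_iff_adj.mpr hadj).le.trans one_le_two
  · have huv : u.1 ⊓ v.1 = ⊥ := by
      by_contra h
      exact hadj ⟨hne, h⟩
    obtain ⟨w, h1, h2⟩ := common_neighbor h0dist hatoms u v huv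
    have := SimpleGraph.dist_le
      (SimpleGraph.Walk.cons h1 (SimpleGraph.Walk.cons h2 SimpleGraph.Walk.nil))
    simpa using this

end Aux

/-- for an atomic 0-distributive lattice with at least three atoms,
every vertex of `G^c(L)` is mutually maximally distant from some vertex; hence the
boundary (vertex set of the strong resolving graph) is all of `Z*(L)`. -/
theorem every_vertex_in_boundary
    (L : Type*) [Lattice L] [OrderBot L] [IsAtomic L]
    (h0dist : ∀ a b c : L, a ⊓ b = ⊥ → a ⊓ c = ⊥ → a ⊓ (b ⊔ c) = ⊥)
    (hatoms : ∃ a b c : L, IsAtom a ∧ IsAtom b ∧ IsAtom c ∧ a ≠ b ∧ a ≠ c ∧ b ≠ c) :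
    ∀ x : ZStar L, ∃ y : ZStar L, x ≠ y ∧ MutuallyMaxDistant (GcL L) x y := by
  intro x
  obtain ⟨hx0, b, hb0, hxb⟩ := x.2
  obtain ⟨q, hq, hqb⟩ := (IsAtomic.eq_bot_or_exists_atom_le b).resolve_left hb0
  have hxq : x.1 ⊓ q = ⊥ :=
    le_antisymm ((inf_le_inf_left _ hqb).trans hxb.le) bot_le
  refine ⟨⟨q, hq.1, x.1, hx0, by rw [inf_comm]; exact hxq⟩, ?_, ?_, ?_⟩
  case refine_1 =>
    intro h
    apply hq.1
    rw [show x.1 = q from congrArg Subtype.val h, inf_idem] at hxq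
    exact hxq
  all_goals
    set y : ZStar L := ⟨q, hq.1, x.1, hx0, by rw [inf_comm]; exact hxq⟩ with hy
    have hxy : x ≠ y := by
      intro h
      apply hq.1
      rw [show x.1 = q from congrArg Subtype.val h, inf_idem] at hxq
      exact hxq
    have hnadj : ¬ (GcL L).Adj x y := fun h => h.2 hxq
    have hd2 : ∀ u v : ZStar L, (GcL L).dist u v ≤ 2 := dist_le_two h0dist hatoms
    have hdist : (GcL L).dist x y = 2 := by
      refine le_antisymm (hd2 x y) ?_
      obtain ⟨w, h1, h2⟩ := common_neighbor h0dist hatoms x y hxq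
      have hreach : (GcL L).Reachable x y :=
        ⟨SimpleGraph.Walk.cons h1 (SimpleGraph.Walk.cons h2 SimpleGraph.Walk.nil)⟩
      have hpos : 0 < (GcL L).dist x y := hreach.pos_dist_of_ne hxy
      have hne1 : (GcL L).dist x y ≠ 1 := fun h =>
        hnadj (SimpleGraph.dist_eq_one_iff_adj.mp h)
      omega
  case refine_2 =>
    intro w _
    rw [hdist]
    exact hd2 _ _
  case refine_3 =>
    intro w _
    have h2' : (GcL L).dist y x = 2 := by rw [SimpleGraph.dist_comm]; exact hdist
    rw [h2']
    exact hd2 _ _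
end

section
/- Let n ≥ 3 and let F_1, …, F_n be finite fields, and set R = F_1 × ⋯ × F_n. Let Γ^c(R) be the complement of the zero-divisor graph of R: its vertices are the nonzero zero-divisors Z*(R) of R, and distinct vertices x, y are adjacent iff x·y ≠ 0. Then sdim_M(Γ^c(R)) = |Z*(R)| − 2^{n−1} + 1. -/
/-- The set of nonzero zero-divisors of a commutative ring `R`. -/
def ZStarR (R : Type*) [CommRing R] : Type _ :=
  {x : R // x ≠ 0 ∧ ∃ y : R, y ≠ 0 ∧ x * y = 0}

/-- The complement `Γ^c(R)` of the zero-divisor graph of a commutative ring `R`: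
distinct nonzero zero-divisors are adjacent iff their product is nonzero. -/
def GammaC (R : Type*) [CommRing R] : SimpleGraph (ZStarR R) where
  Adj x y := x ≠ y ∧ x.1 * y.1 ≠ 0
  symm := ⟨fun x y h => ⟨h.1.symm, by rw [mul_comm]; exact h.2⟩⟩
  loopless := ⟨fun x h => h.1 rfl⟩

/-- `w` strongly resolves `u` and `v` in `G`. -/
def StronglyResolves {V : Type*} (G : SimpleGraph V) (w u v : V) : Prop :=
  G.dist u w = G.dist u v + G.dist v w ∨ G.dist v w = G.dist v u + G.dist u w

/-- A strong resolving set for `G`. -/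
def IsStrongResolvingSet {V : Type*} (G : SimpleGraph V) (W : Set V) : Prop :=
  ∀ u v : V, u ≠ v → ∃ w ∈ W, StronglyResolves G w u v

/-- The strong metric dimension of `G`. -/
noncomputable def sdim {V : Type*} (G : SimpleGraph V) : ℕ :=
  sInf {k | ∃ W : Set V, W.Finite ∧ IsStrongResolvingSet G W ∧ Nat.card W = k}

section Counting

lemma SDM.ncard_P {n : ℕ} (hn : 3 ≤ n) :
    ({S : Finset (Fin n) | S ≠ ∅ ∧ S ≠ Finset.univ}).ncard = 2 ^ n - 2 := by
  haveI : Nonempty (Fin n) := ⟨⟨0, by omega⟩⟩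
  have hne : (∅ : Finset (Fin n)) ≠ Finset.univ :=
    Ne.symm (Finset.Nonempty.ne_empty Finset.univ_nonempty)
  have h1 : ({S : Finset (Fin n) | S ≠ ∅ ∧ S ≠ Finset.univ})
      = ({∅, Finset.univ} : Set (Finset (Fin n)))ᶜ := by
    ext S
    simp [not_or]
  rw [h1]
  have h2 := Set.ncard_add_ncard_compl ({∅, Finset.univ} : Set (Finset (Fin n)))
  have h3 : ({∅, Finset.univ} : Set (Finset (Fin n))).ncard = 2 := Set.ncard_pair hne
  have h4 : Nat.card (Finset (Fin n)) = 2 ^ n := by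
    simp [Nat.card_eq_fintype_card, Fintype.card_finset]
  omega

lemma SDM.ncard_A {n : ℕ} (hn : 3 ≤ n) (i0 : Fin n) :
    ({S : Finset (Fin n) | i0 ∈ S ∧ S ≠ Finset.univ}).ncard = 2 ^ (n - 1) - 1 := by
  classical
  have h1 : ({S : Finset (Fin n) | i0 ∈ S ∧ S ≠ Finset.univ})
      = ↑((Finset.univ.filter (fun S : Finset (Fin n) => i0 ∈ S)).erase Finset.univ) := by
    ext S
    simp only [Set.mem_setOf_eq, Finset.coe_erase, Set.mem_diff, Finset.mem_coe,
      Finset.mem_filter, Finset.mem_univ, true_and, Set.mem_singleton_iff]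
  rw [h1, Set.ncard_coe_finset, Finset.card_erase_of_mem (by simp)]
  have h2 : (Finset.univ.filter (fun S : Finset (Fin n) => i0 ∈ S)).card
      = ((Finset.univ.erase i0).powerset).card := by
    apply Finset.card_nbij' (fun S => S.erase i0) (fun T => insert i0 T)
    · intro S hS
      simp only [Finset.mem_coe, Finset.mem_powerset]
      intro k hk
      simp only [Finset.mem_erase] at hk ⊢
      exact ⟨hk.1, Finset.mem_univ _⟩
    · intro T hT
      simp
    · intro S hS
      simp only [Finset.mem_coe, Finset.mem_filter] at hS
      exact Finset.insert_erase hS.2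
    · intro T hT
      simp only [Finset.mem_coe, Finset.mem_powerset] at hT
      apply Finset.erase_insert
      intro h
      have := hT h
      simp at this
  rw [h2, Finset.card_powerset, Finset.card_erase_of_mem (Finset.mem_univ _),
    Finset.card_univ, Fintype.card_fin]

end Counting

section Aux

set_option linter.unusedSectionVars false

variable {n : ℕ} {F : Fin n → Type*} [∀ i, Field (F i)] [∀ i, Fintype (F i)]

lemma SDM.pi_mul_eq_zero_iff (x y : ∀ i, F i) : x * y = 0 ↔ ∀ i, x i = 0 ∨ y i = 0 := by
  simp [funext_iff, mul_eq_zero]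

lemma SDM.pi_mul_ne_zero_iff (x y : ∀ i, F i) : x * y ≠ 0 ↔ ∃ i, x i ≠ 0 ∧ y i ≠ 0 := by
  rw [Ne, SDM.pi_mul_eq_zero_iff]
  push_neg
  rfl

/-- The canonical element with support `S`. -/
noncomputable def SDM.indV (F : Fin n → Type*) [∀ i, Field (F i)] (S : Finset (Fin n)) :
    ∀ i, F i := fun i => if i ∈ S then 1 else 0

lemma SDM.indV_ne_zero_iff (S : Finset (Fin n)) (i : Fin n) :
    SDM.indV F S i ≠ 0 ↔ i ∈ S := by
  by_cases h : i ∈ S <;> simp [SDM.indV, h]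

lemma SDM.indV_eq_zero_iff (S : Finset (Fin n)) (i : Fin n) :
    SDM.indV F S i = 0 ↔ i ∉ S := by
  rw [← SDM.indV_ne_zero_iff (F := F)]; tauto

lemma SDM.mem_zstar_of (x : ∀ i, F i) (h0 : x ≠ 0) (j : Fin n) (hj : x j = 0) :
    x ≠ 0 ∧ ∃ y, y ≠ 0 ∧ x * y = 0 := by
  refine ⟨h0, SDM.indV F {j}, ?_, ?_⟩
  · intro h
    have := congrFun h j
    simp [SDM.indV] at this
  · rw [SDM.pi_mul_eq_zero_iff]
    intro i
    by_cases hij : i = j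
    · subst hij; exact Or.inl hj
    · right; simp [SDM.indV, hij]

lemma SDM.vertex_exists_zero (u : ZStarR (∀ i, F i)) : ∃ i, u.1 i = 0 := by
  obtain ⟨y, hy, hxy⟩ := u.2.2
  by_contra h
  push_neg at h
  apply hy
  funext i
  rcases (SDM.pi_mul_eq_zero_iff _ _).1 hxy i with h1 | h1
  · exact absurd h1 (h i)
  · exact h1

lemma SDM.vertex_exists_ne_zero (u : ZStarR (∀ i, F i)) : ∃ i, u.1 i ≠ 0 := by
  by_contra h
  push_neg at h
  exact u.2.1 (funext h)

/-- The canonical vertex with support `S`. -/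
noncomputable def SDM.vtx (F : Fin n → Type*) [∀ i, Field (F i)] [∀ i, Fintype (F i)]
    (S : Finset (Fin n))
    (h1 : S.Nonempty) (h2 : S ≠ Finset.univ) : ZStarR (∀ i, F i) :=
  ⟨SDM.indV F S, by
    have hj : ∃ j, j ∉ S := by
      by_contra h
      push_neg at h
      exact h2 (Finset.eq_univ_iff_forall.2 h)
    obtain ⟨j, hj⟩ := hj
    obtain ⟨i, hi⟩ := h1
    refine SDM.mem_zstar_of _ ?_ j ?_
    · intro h
      have := congrFun h i
      simp [SDM.indV, hi] at this
    · simp [SDM.indV, hj]⟩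

@[simp] lemma SDM.vtx_val (S : Finset (Fin n)) (h1 : S.Nonempty) (h2 : S ≠ Finset.univ) :
    (SDM.vtx F S h1 h2).1 = SDM.indV F S := rfl

lemma SDM.adj_iff {u v : ZStarR (∀ i, F i)} :
    (GammaC (∀ i, F i)).Adj u v ↔ u ≠ v ∧ ∃ i, u.1 i ≠ 0 ∧ v.1 i ≠ 0 :=
  and_congr_right fun _ => SDM.pi_mul_ne_zero_iff _ _

lemma SDM.exists_third (hn : 3 ≤ n) (i j : Fin n) : ∃ k : Fin n, k ≠ i ∧ k ≠ j := by
  by_contra h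
  push_neg at h
  have hsub : (Finset.univ : Finset (Fin n)) ⊆ {i, j} := by
    intro k _
    by_cases hki : k = i
    · simp [hki]
    · simp [h k hki]
  have := Finset.card_le_card hsub
  have h2 : ({i, j} : Finset (Fin n)).card ≤ 2 := by
    apply le_trans (Finset.card_insert_le _ _)
    simp
  simp [Finset.card_univ] at this
  omega

lemma SDM.pair_ne_univ (hn : 3 ≤ n) (i j : Fin n) : ({i, j} : Finset (Fin n)) ≠ Finset.univ := by
  obtain ⟨k, hk1, hk2⟩ := SDM.exists_third hn i j
  intro h
  have : k ∈ ({i, j} : Finset (Fin n)) := h ▸ Finset.mem_univ k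
  simp [hk1, hk2] at this

lemma SDM.singleton_ne_univ (hn : 3 ≤ n) (i : Fin n) :
    ({i} : Finset (Fin n)) ≠ Finset.univ := by
  obtain ⟨k, hk1, _⟩ := SDM.exists_third hn i i
  intro h
  have : k ∈ ({i} : Finset (Fin n)) := h ▸ Finset.mem_univ k
  simp [hk1] at this

lemma SDM.dist_adj {u v : ZStarR (∀ i, F i)} (h : (GammaC (∀ i, F i)).Adj u v) :
    (GammaC (∀ i, F i)).dist u v = 1 :=
  SimpleGraph.dist_eq_one_iff_adj.2 h

lemma SDM.dist_two (hn : 3 ≤ n) {u v : ZStarR (∀ i, F i)} (hne : u ≠ v)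
    (hz : u.1 * v.1 = 0) : (GammaC (∀ i, F i)).dist u v = 2 := by
  obtain ⟨i, hi⟩ := SDM.vertex_exists_ne_zero u
  obtain ⟨j, hj⟩ := SDM.vertex_exists_ne_zero v
  have hzz := (SDM.pi_mul_eq_zero_iff _ _).1 hz
  have hvi : v.1 i = 0 := (hzz i).resolve_left hi
  have huj : u.1 j = 0 := (hzz j).resolve_right hj
  set z := SDM.vtx F {i, j} ⟨i, by simp⟩ (SDM.pair_ne_univ hn i j) with hzdef
  have hzi : z.1 i ≠ 0 := by erw [SDM.vtx_val, SDM.indV_ne_zero_iff]; simp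
  have hzj : z.1 j ≠ 0 := by erw [SDM.vtx_val, SDM.indV_ne_zero_iff]; simp
  have hzu : u ≠ z := by
    intro h
    rw [h] at huj
    exact hzj huj
  have hzv : z ≠ v := by
    intro h
    rw [← h] at hvi
    exact hzi hvi
  have hadj1 : (GammaC (∀ i, F i)).Adj u z := SDM.adj_iff.2 ⟨hzu, i, hi, hzi⟩
  have hadj2 : (GammaC (∀ i, F i)).Adj z v := SDM.adj_iff.2 ⟨hzv, j, hzj, hj⟩
  have hle : (GammaC (∀ i, F i)).dist u v ≤ 2 := by
    simpa using SimpleGraph.dist_le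
      (SimpleGraph.Walk.cons hadj1 (SimpleGraph.Walk.cons hadj2 SimpleGraph.Walk.nil))
  have hne1 : (GammaC (∀ i, F i)).dist u v ≠ 1 := by
    intro h
    have := SimpleGraph.dist_eq_one_iff_adj.1 h
    exact this.2 hz
  have hpos : 0 < (GammaC (∀ i, F i)).dist u v :=
    SimpleGraph.Reachable.pos_dist_of_ne
      ⟨SimpleGraph.Walk.cons hadj1 (SimpleGraph.Walk.cons hadj2 SimpleGraph.Walk.nil)⟩ hne
  omega

lemma SDM.dist_cases (hn : 3 ≤ n) {u v : ZStarR (∀ i, F i)} (hne : u ≠ v) :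
    (GammaC (∀ i, F i)).dist u v = 1 ∨ (GammaC (∀ i, F i)).dist u v = 2 := by
  by_cases hz : u.1 * v.1 = 0
  · exact Or.inr (SDM.dist_two hn hne hz)
  · exact Or.inl (SDM.dist_adj ⟨hne, hz⟩)

/-- The edge relation of the "strong resolving graph": mutually maximally distant pairs. -/
def SDM.HRel (u v : ZStarR (∀ i, F i)) : Prop :=
  u ≠ v ∧ (u.1 * v.1 = 0 ∨ ∀ i, (u.1 i = 0 ↔ v.1 i = 0))

/-- A vertex cover of the strong resolving graph. -/
def SDM.IsCover (W : Set (ZStarR (∀ i, F i))) : Prop :=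
  ∀ u v, SDM.HRel u v → u ∈ W ∨ v ∈ W

lemma SDM.resolves_left {V : Type*} (G : SimpleGraph V) (u v : V) :
    StronglyResolves G u u v := by
  right
  simp [StronglyResolves, SimpleGraph.dist_self, SimpleGraph.dist_comm]

lemma SDM.resolves_right {V : Type*} (G : SimpleGraph V) (u v : V) :
    StronglyResolves G v u v := by
  left
  simp [SimpleGraph.dist_self]

lemma SDM.resolves_symm {V : Type*} {G : SimpleGraph V} {w u v : V}
    (h : StronglyResolves G w u v) : StronglyResolves G w v u := h.symm

/-- key helper: asymmetric adjacent case -/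
lemma SDM.resolve_asym (hn : 3 ≤ n) {W : Set (ZStarR (∀ i, F i))} (hW : SDM.IsCover W)
    {u v : ZStarR (∀ i, F i)} (hne : u ≠ v) (hadj : u.1 * v.1 ≠ 0) (i : Fin n)
    (hu : u.1 i ≠ 0) (hv : v.1 i = 0) :
    ∃ w ∈ W, StronglyResolves (GammaC (∀ i, F i)) w u v := by
  obtain ⟨k, hk1, hk2⟩ := (SDM.pi_mul_ne_zero_iff _ _).1 hadj
  have hki : k ≠ i := fun h => hk2 (h ▸ hv)
  set w := SDM.vtx F {i} ⟨i, by simp⟩ (SDM.singleton_ne_univ hn i) with hwdef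
  have hwi : w.1 i ≠ 0 := by erw [SDM.vtx_val, SDM.indV_ne_zero_iff]; simp
  have hwk : w.1 k = 0 := by
    erw [SDM.vtx_val, SDM.indV_eq_zero_iff]; simp [hki]
  have hwu : w ≠ u := fun h => hk1 (by rw [← h]; exact hwk)
  have hwv : w ≠ v := fun h => hwi (by rw [h]; exact hv)
  have hwvz : w.1 * v.1 = 0 := by
    rw [SDM.pi_mul_eq_zero_iff]
    intro j
    by_cases hji : j = i
    · subst hji; exact Or.inr hv
    · left; erw [SDM.vtx_val, SDM.indV_eq_zero_iff]; simp [hji]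
  rcases hW w v ⟨hwv, Or.inl hwvz⟩ with hmem | hmem
  · refine ⟨w, hmem, Or.inr ?_⟩
    have d1 : (GammaC (∀ i, F i)).dist v u = 1 := by
      rw [SimpleGraph.dist_comm]; exact SDM.dist_adj ⟨hne, hadj⟩
    have d2 : (GammaC (∀ i, F i)).dist u w = 1 :=
      SDM.dist_adj (SDM.adj_iff.2 ⟨Ne.symm hwu, i, hu, hwi⟩)
    have d3 : (GammaC (∀ i, F i)).dist v w = 2 :=
      SDM.dist_two hn (Ne.symm hwv) (by rw [mul_comm]; exact hwvz)
    omega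
  · exact ⟨v, hmem, SDM.resolves_right _ _ _⟩

lemma SDM.srs_iff_cover (hn : 3 ≤ n) (W : Set (ZStarR (∀ i, F i))) :
    IsStrongResolvingSet (GammaC (∀ i, F i)) W ↔ SDM.IsCover W := by
  constructor
  · intro hsrs u v ⟨hne, hrel⟩
    obtain ⟨w, hwW, hw⟩ := hsrs u v hne
    by_cases hwu : w = u
    · exact Or.inl (hwu ▸ hwW)
    by_cases hwv : w = v
    · exact Or.inr (hwv ▸ hwW)
    exfalso
    rcases hrel with hz | hsupp
    · -- distance two pair
      have duv : (GammaC (∀ i, F i)).dist u v = 2 := SDM.dist_two hn hne hz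
      have duw := SDM.dist_cases hn (fun h => hwu h.symm : u ≠ w)
      have dvw := SDM.dist_cases hn (fun h => hwv h.symm : v ≠ w)
      have dvu : (GammaC (∀ i, F i)).dist v u = 2 := by
        rw [SimpleGraph.dist_comm]; exact duv
      rcases duw with h1 | h1 <;> rcases dvw with h2 | h2 <;>
        rcases hw with h | h <;> omega
    · -- equal supports
      have hadj : u.1 * v.1 ≠ 0 := by
        obtain ⟨i, hi⟩ := SDM.vertex_exists_ne_zero u
        have hvi : v.1 i ≠ 0 := fun h => hi ((hsupp i).2 h)
        exact (SDM.pi_mul_ne_zero_iff _ _).2 ⟨i, hi, hvi⟩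
      have duv : (GammaC (∀ i, F i)).dist u v = 1 := SDM.dist_adj ⟨hne, hadj⟩
      have dvu : (GammaC (∀ i, F i)).dist v u = 1 := by
        rw [SimpleGraph.dist_comm]; exact duv
      have heq : (GammaC (∀ i, F i)).dist u w = (GammaC (∀ i, F i)).dist v w := by
        by_cases hz2 : u.1 * w.1 = 0
        · have hz3 : v.1 * w.1 = 0 := by
            rw [SDM.pi_mul_eq_zero_iff] at hz2 ⊢
            intro i
            rcases hz2 i with h | h
            · exact Or.inl ((hsupp i).1 h)
            · exact Or.inr h
          rw [SDM.dist_two hn (Ne.symm hwu) hz2, SDM.dist_two hn (Ne.symm hwv) hz3]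
        · have hz3 : v.1 * w.1 ≠ 0 := by
            obtain ⟨i, h1, h2⟩ := (SDM.pi_mul_ne_zero_iff _ _).1 hz2
            exact (SDM.pi_mul_ne_zero_iff _ _).2 ⟨i, fun h => h1 ((hsupp i).2 h), h2⟩
          rw [SDM.dist_adj ⟨Ne.symm hwu, hz2⟩, SDM.dist_adj ⟨Ne.symm hwv, hz3⟩]
      rcases hw with h | h
      · rw [duv, heq] at h; omega
      · rw [dvu, ← heq] at h; omega
  · intro hcov u v hne
    by_cases hz : u.1 * v.1 = 0
    · rcases hcov u v ⟨hne, Or.inl hz⟩ with h | h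
      · exact ⟨u, h, SDM.resolves_left _ _ _⟩
      · exact ⟨v, h, SDM.resolves_right _ _ _⟩
    · by_cases hsupp : ∀ i, (u.1 i = 0 ↔ v.1 i = 0)
      · rcases hcov u v ⟨hne, Or.inr hsupp⟩ with h | h
        · exact ⟨u, h, SDM.resolves_left _ _ _⟩
        · exact ⟨v, h, SDM.resolves_right _ _ _⟩
      · push_neg at hsupp
        obtain ⟨i, hi⟩ := hsupp
        by_cases h1 : u.1 i = 0
        · -- then v.1 i ≠ 0; apply asym to (v, u)
          have h2 : v.1 i ≠ 0 := by tauto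
          obtain ⟨w, hwW, hw⟩ :=
            SDM.resolve_asym hn hcov (Ne.symm hne) (by rw [mul_comm]; exact hz) i h2 h1
          exact ⟨w, hwW, SDM.resolves_symm hw⟩
        · have h2 : v.1 i = 0 := by tauto
          exact SDM.resolve_asym hn hcov hne hz i h1 h2


instance SDM.instFinite (R : Type*) [CommRing R] [Finite R] : Finite (ZStarR R) :=
  inferInstanceAs (Finite {x : R // x ≠ 0 ∧ ∃ y : R, y ≠ 0 ∧ x * y = 0})

open Classical in
noncomputable def SDM.suppV (u : ZStarR (∀ i, F i)) : Finset (Fin n) :=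
  Finset.univ.filter (fun i => u.1 i ≠ 0)

lemma SDM.mem_suppV {u : ZStarR (∀ i, F i)} {i : Fin n} :
    i ∈ SDM.suppV u ↔ u.1 i ≠ 0 := by
  simp [SDM.suppV]

lemma SDM.indep_bound (hn : 3 ≤ n) (C : Set (ZStarR (∀ i, F i)))
    (hC : ∀ u ∈ C, ∀ v ∈ C, u ≠ v → ¬SDM.HRel u v) :
    C.ncard ≤ 2 ^ (n - 1) - 1 := by
  classical
  have hinj : Set.InjOn SDM.suppV C := by
    intro u hu v hv h
    by_contra hne
    apply hC u hu v hv hne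
    refine ⟨hne, Or.inr fun i => ?_⟩
    have h2 := Finset.ext_iff.1 h i
    rw [SDM.mem_suppV, SDM.mem_suppV] at h2
    tauto
  set G : Set (Finset (Fin n)) := SDM.suppV '' C with hG
  have hGP : G ⊆ {S | S ≠ ∅ ∧ S ≠ Finset.univ} := by
    rintro S ⟨u, hu, rfl⟩
    constructor
    · obtain ⟨i, hi⟩ := SDM.vertex_exists_ne_zero u
      exact Finset.Nonempty.ne_empty ⟨i, SDM.mem_suppV.2 hi⟩
    · obtain ⟨j, hj⟩ := SDM.vertex_exists_zero u
      intro h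
      have hmem : j ∈ SDM.suppV u := h ▸ Finset.mem_univ j
      exact (SDM.mem_suppV.1 hmem) hj
  have hGcP : (fun S : Finset (Fin n) => Sᶜ) '' G ⊆ {S | S ≠ ∅ ∧ S ≠ Finset.univ} := by
    rintro T ⟨S, hS, rfl⟩
    obtain ⟨h1, h2⟩ := hGP hS
    constructor
    · intro h; apply h2; rwa [Finset.compl_eq_empty_iff] at h
    · intro h; apply h1; rwa [Finset.compl_eq_univ_iff] at h
  have hdisj : Disjoint G ((fun S : Finset (Fin n) => Sᶜ) '' G) := by
    rw [Set.disjoint_left]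
    rintro S hS ⟨T, hT, rfl⟩
    obtain ⟨u, hu, hu2⟩ := hS
    obtain ⟨v, hv, rfl⟩ := hT
    have hne : u ≠ v := by
      rintro rfl
      obtain ⟨i, hi⟩ := SDM.vertex_exists_ne_zero u
      have h1 : i ∈ SDM.suppV u := SDM.mem_suppV.2 hi
      rw [hu2, Finset.mem_compl] at h1
      exact h1 (SDM.mem_suppV.2 hi)
    apply hC u hu v hv hne
    refine ⟨hne, Or.inl ?_⟩
    rw [SDM.pi_mul_eq_zero_iff]
    intro i
    by_cases h : u.1 i = 0
    · exact Or.inl h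
    · right
      have hmem : i ∈ SDM.suppV u := SDM.mem_suppV.2 h
      rw [hu2, Finset.mem_compl] at hmem
      by_contra h2
      exact hmem (SDM.mem_suppV.2 h2)
  have hcard : G.ncard + ((fun S : Finset (Fin n) => Sᶜ) '' G).ncard ≤ 2 ^ n - 2 := by
    rw [← Set.ncard_union_eq hdisj]
    calc (G ∪ (fun S : Finset (Fin n) => Sᶜ) '' G).ncard
        ≤ ({S : Finset (Fin n) | S ≠ ∅ ∧ S ≠ Finset.univ}).ncard :=
          Set.ncard_le_ncard (Set.union_subset hGP hGcP)
      _ = 2 ^ n - 2 := SDM.ncard_P hn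
  have himgcard : ((fun S : Finset (Fin n) => Sᶜ) '' G).ncard = G.ncard :=
    Set.ncard_image_of_injective _ compl_injective
  have hCG : G.ncard = C.ncard := Set.ncard_image_of_injOn hinj
  have hpow : 2 ^ (n - 1 + 1) = 2 ^ (n - 1) * 2 := pow_succ 2 (n - 1)
  have hn1 : n - 1 + 1 = n := by omega
  rw [hn1] at hpow
  omega

end Aux


/-- for a product `R = F₁ × ⋯ × Fₙ` of finite fields with `n ≥ 3`,
`sdim_M(Γ^c(R)) = |Z*(R)| - 2^(n-1) + 1`. -/
theorem sdim_gammac_product_of_fields (n : ℕ) (hn : 3 ≤ n)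
    (F : Fin n → Type*) [∀ i, Field (F i)] [∀ i, Fintype (F i)] :
    sdim (GammaC (∀ i, F i)) = Nat.card (ZStarR (∀ i, F i)) - 2 ^ (n - 1) + 1 := by
  classical
  set i0 : Fin n := ⟨0, by omega⟩ with hi0
  set i1 : Fin n := ⟨1, by omega⟩ with hi1
  have hi01 : i0 ≠ i1 := by
    simp [hi0, hi1, Fin.ext_iff]
  set v0 : ZStarR (∀ i, F i) :=
    SDM.vtx F {i1} ⟨i1, by simp⟩ (SDM.singleton_ne_univ hn i1) with hv0
  set g : Finset (Fin n) → ZStarR (∀ i, F i) := fun S =>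
    if h : i0 ∈ S ∧ S ≠ Finset.univ then SDM.vtx F S ⟨i0, h.1⟩ h.2 else v0 with hg
  set A : Set (Finset (Fin n)) := {S | i0 ∈ S ∧ S ≠ Finset.univ} with hA
  set I : Set (ZStarR (∀ i, F i)) := g '' A with hI
  have hgval : ∀ S, S ∈ A → (g S).1 = SDM.indV F S := by
    intro S hS
    rw [hg]
    simp only
    rw [dif_pos (show i0 ∈ S ∧ S ≠ Finset.univ from hS)]
    rfl
  have hInj : Set.InjOn g A := by
    intro S hS T hT h
    have hv : SDM.indV F S = SDM.indV F T := by
      rw [← hgval S hS, ← hgval T hT, h]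
    ext i
    rw [← SDM.indV_ne_zero_iff (F := F) S i, ← SDM.indV_ne_zero_iff (F := F) T i, hv]
  have hI_ncard : I.ncard = 2 ^ (n - 1) - 1 := by
    rw [hI, Set.ncard_image_of_injOn hInj, hA, SDM.ncard_A hn i0]
  have hcover : SDM.IsCover Iᶜ := by
    rintro u v ⟨hne, hrel⟩
    by_contra hcon
    push_neg at hcon
    obtain ⟨hu, hv⟩ := hcon
    rw [Set.notMem_compl_iff] at hu hv
    obtain ⟨S, hS, rfl⟩ := hu
    obtain ⟨T, hT, hTv⟩ := hv
    rcases hrel with hz | hsupp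
    · have h1 : (g S).1 i0 ≠ 0 := by
        rw [hgval S hS, SDM.indV_ne_zero_iff]
        exact hS.1
      have h2 : v.1 i0 ≠ 0 := by
        rw [← hTv, hgval T hT, SDM.indV_ne_zero_iff]
        exact hT.1
      rcases (SDM.pi_mul_eq_zero_iff _ _).1 hz i0 with h | h
      · exact h1 h
      · exact h2 h
    · apply hne
      rw [← hTv]
      have hST : S = T := by
        ext i
        rw [← SDM.indV_ne_zero_iff (F := F) S i, ← SDM.indV_ne_zero_iff (F := F) T i]
        have h1 := hsupp i
        rw [hgval S hS, ← hTv, hgval T hT] at h1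
        tauto
      rw [hST]
  have hsetdef : {k | ∃ W : Set (ZStarR (∀ i, F i)), W.Finite ∧
      IsStrongResolvingSet (GammaC (∀ i, F i)) W ∧ Nat.card W = k}
      = {k | ∃ W : Set (ZStarR (∀ i, F i)), W.Finite ∧
      IsStrongResolvingSet (GammaC (∀ i, F i)) W ∧ Nat.card W = k} := rfl
  have hIcompl := Set.ncard_add_ncard_compl I
  have hmem : Nat.card (ZStarR (∀ i, F i)) - (2 ^ (n - 1) - 1) ∈
      {k | ∃ W : Set (ZStarR (∀ i, F i)), W.Finite ∧
        IsStrongResolvingSet (GammaC (∀ i, F i)) W ∧ Nat.card W = k} := by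
    refine ⟨Iᶜ, Set.toFinite _, (SDM.srs_iff_cover hn _).2 hcover, ?_⟩
    rw [Nat.card_coe_set_eq]
    omega
  have hlb : ∀ k ∈ {k | ∃ W : Set (ZStarR (∀ i, F i)), W.Finite ∧
      IsStrongResolvingSet (GammaC (∀ i, F i)) W ∧ Nat.card W = k},
      Nat.card (ZStarR (∀ i, F i)) - (2 ^ (n - 1) - 1) ≤ k := by
    rintro k ⟨W, hWf, hWsrs, rfl⟩
    have hcov := (SDM.srs_iff_cover hn W).1 hWsrs
    have hind : ∀ u ∈ Wᶜ, ∀ v ∈ Wᶜ, u ≠ v → ¬SDM.HRel u v := by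
      intro u hu v hv hne hrel
      rcases hcov u v hrel with h | h
      · exact hu h
      · exact hv h
    have hb := SDM.indep_bound hn Wᶜ hind
    have hsum := Set.ncard_add_ncard_compl W
    rw [Nat.card_coe_set_eq]
    omega
  have hsdim : sdim (GammaC (∀ i, F i))
      = Nat.card (ZStarR (∀ i, F i)) - (2 ^ (n - 1) - 1) :=
    le_antisymm (Nat.sInf_le hmem) (hlb _ (Nat.sInf_mem ⟨_, hmem⟩))
  have hv0I : v0 ∉ I := by
    rintro ⟨S, hS, heq⟩
    have h1 : (g S).1 i0 ≠ 0 := by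
      rw [hgval S hS, SDM.indV_ne_zero_iff]
      exact hS.1
    apply h1
    erw [heq, hv0, SDM.vtx_val, SDM.indV_eq_zero_iff]
    simp [hi01]
  have hbig : 2 ^ (n - 1) ≤ Nat.card (ZStarR (∀ i, F i)) := by
    have h1 : (insert v0 I).ncard = I.ncard + 1 := Set.ncard_insert_of_notMem hv0I
    have h2 : (insert v0 I).ncard ≤ Nat.card (ZStarR (∀ i, F i)) := by
      rw [← Set.ncard_univ]
      exact Set.ncard_le_ncard (Set.subset_univ _)
    have h3 : (1 : ℕ) ≤ 2 ^ (n - 1) := Nat.one_le_two_pow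
    omega
  have h3 : (1 : ℕ) ≤ 2 ^ (n - 1) := Nat.one_le_two_pow
  rw [hsdim]
  omega
end
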